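/- Define δ(B) := det(𝔖(B)) mod 4 where 𝔖(B) = V(B) + V(B)ᵀ. Then δ is a mutation invariant: for any skew-symmetric B ∈ M_n(ℤ) and any k ∈ [n], δ(μ_k(B)) = δ(B), where μ_k(B) = M_k·B·M_kᵀ with M_k the replicating matrix of B at k. -/

import Mathlib

open Matrix

def upperV {n : ℕ} (B : Matrix (Fin n) (Fin n) ℤ) : Matrix (Fin n) (Fin n) ℤ :=
  Matrix.of fun i j => if i < j then B i j else if i = j then 1 else 0

def symS {n : ℕ} (B : Matrix (Fin n) (Fin n) ℤ) : Matrix (Fin n) (Fin n) ℤ :=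
  upperV B + (upperV B)ᵀ

def deltaInv {n : ℕ} (B : Matrix (Fin n) (Fin n) ℤ) : ℤ := (symS B).det % 4

def repM {n : ℕ} (B : Matrix (Fin n) (Fin n) ℤ) (k : Fin n) : Matrix (Fin n) (Fin n) ℤ :=
  (Matrix.of fun i j => if i = j then (if i = k then (-1 : ℤ) else 1) else 0) +
  (Matrix.of fun i j => if j = k then max 0 (-(B i k)) else 0)

def mutB {n : ℕ} (B : Matrix (Fin n) (Fin n) ℤ) (k : Fin n) : Matrix (Fin n) (Fin n) ℤ :=
  repM B k * B * (repM B k)ᵀ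

section Stmt15Helpers
open Finset


lemma cast_eq_iff_dvd (m : ℕ) (a b : ℤ) : ((a : ZMod m) = b) ↔ (m : ℤ) ∣ b - a := by
  rw [ZMod.intCast_eq_intCast_iff, Int.modEq_iff_dvd]

lemma det_mod2 {n : ℕ} (X Y : Matrix (Fin n) (Fin n) ℤ)
    (h : ∀ i j, (2:ℤ) ∣ X i j - Y i j) : (2:ℤ) ∣ X.det - Y.det := by
  have hmap : (Int.castRingHom (ZMod 2)).mapMatrix X = (Int.castRingHom (ZMod 2)).mapMatrix Y := by
    ext i j
    simp only [RingHom.mapMatrix_apply, Matrix.map_apply, Int.coe_castRingHom]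
    exact (cast_eq_iff_dvd 2 _ _).2 (dvd_sub_comm.mp (h i j))
  have hdet : ((X.det : ZMod 2)) = (Y.det : ZMod 2) := by
    have h2 := congrArg Matrix.det hmap
    rw [← RingHom.map_det, ← RingHom.map_det] at h2
    exact_mod_cast h2
  exact dvd_sub_comm.mp ((cast_eq_iff_dvd 2 _ _).1 hdet)

lemma sum_det_even {n : ℕ} (A C : Matrix (Fin n) (Fin n) ℤ) (hA : Aᵀ = A) (hC : Cᵀ = C)
    (hd : ∀ i, (2:ℤ) ∣ C i i) :
    (2:ℤ) ∣ ∑ j, (A.updateCol j (fun i => C i j)).det := by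
  have key : ((∑ j, (A.updateCol j (fun i => C i j)).det : ℤ) : ZMod 2) = 0 := by
    rw [Int.cast_sum]
    set Abar := A.map (Int.cast : ℤ → ZMod 2) with hAbar
    have hterm : ∀ j : Fin n, (((A.updateCol j fun i => C i j).det : ℤ) : ZMod 2)
        = ∑ i, adjugate Abar j i * ((C i j : ℤ) : ZMod 2) := by
      intro j
      have h1 := RingHom.map_det (Int.castRingHom (ZMod 2)) (A.updateCol j fun i => C i j)
      simp only [RingHom.mapMatrix_apply, Int.coe_castRingHom] at h1
      rw [h1, Matrix.map_updateCol, ← Matrix.cramer_apply, Matrix.cramer_eq_adjugate_mulVec]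
      simp [Matrix.mulVec, dotProduct, Function.comp]
      rfl
    rw [Finset.sum_congr rfl (fun j _ => hterm j), ← Finset.sum_product']
    have hAsym : Abarᵀ = Abar := by rw [hAbar, ← Matrix.transpose_map, hA]
    have hadj : ∀ i j, adjugate Abar i j = adjugate Abar j i := by
      intro i j
      have h := Matrix.adjugate_transpose Abar
      rw [hAsym] at h
      exact (congrFun (congrFun h j) i)
    have hCs : ∀ i j : Fin n, ((C i j : ℤ) : ZMod 2) = ((C j i : ℤ) : ZMod 2) := by
      intro i j
      have : C j i = C i j := congrFun (congrFun hC.symm j) i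
      rw [this]
    have hCd : ∀ i : Fin n, ((C i i : ℤ) : ZMod 2) = 0 :=
      fun i => (ZMod.intCast_zmod_eq_zero_iff_dvd _ 2).2 (hd i)
    refine Finset.sum_ninvolution Prod.swap ?_ ?_ (fun a => Finset.mem_univ _)
      (fun a => Prod.swap_swap a)
    · intro a
      have : adjugate Abar a.swap.1 a.swap.2 * ((C a.swap.2 a.swap.1 : ℤ) : ZMod 2)
          = adjugate Abar a.1 a.2 * ((C a.2 a.1 : ℤ) : ZMod 2) := by
        simp only [Prod.fst_swap, Prod.snd_swap]
        rw [hadj a.2 a.1, hCs a.1 a.2]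
      rw [this, ← two_mul]
      simp [show (2 : ZMod 2) = 0 from rfl]
    · intro a ha hswap
      apply ha
      have h12 : a.1 = a.2 := by
        have := congrArg Prod.fst hswap
        simpa using this.symm
      rw [← h12, hCd, mul_zero]
  exact (ZMod.intCast_zmod_eq_zero_iff_dvd _ 2).1 key

lemma det_add_two_smul {n : ℕ} (A C : Matrix (Fin n) (Fin n) ℤ) (hA : Aᵀ = A) (hC : Cᵀ = C)
    (hd : ∀ i, (2:ℤ) ∣ C i i) : (4:ℤ) ∣ (A + (2:ℤ) • C).det - A.det := by
  classical
  have main : ∀ s : Finset (Fin n),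
      (4:ℤ) ∣ (Matrix.of fun i j => A i j + if j ∈ s then 2 * C i j else 0).det
        - A.det - 2 * ∑ j ∈ s, (A.updateCol j (fun i => C i j)).det := by
    intro s
    induction s using Finset.induction_on with
    | empty =>
        have h0 : (Matrix.of fun i j => A i j + if j ∈ (∅ : Finset (Fin n)) then 2 * C i j else 0)
            = A := by ext i j; simp
        rw [h0]
        simp
    | @insert a s ha ih =>
        set Fs := (Matrix.of fun i j => A i j + if j ∈ s then 2 * C i j else 0) with hFs
        have hF : (Matrix.of fun i j => A i j + if j ∈ insert a s then 2 * C i j else 0)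
            = Fs.updateCol a ((fun i => A i a) + (2:ℤ) • fun i => C i a) := by
          ext i j
          by_cases hj : j = a
          · subst hj
            simp [hFs, Matrix.updateCol_apply, ha]
          · simp [hFs, Matrix.updateCol_apply, hj, Finset.mem_insert]
        rw [hF, Matrix.det_updateCol_add, Matrix.det_updateCol_smul]
        have h1 : Fs.updateCol a (fun i => A i a) = Fs := by
          ext i j
          by_cases hj : j = a
          · subst hj; simp [hFs, Matrix.updateCol_apply, ha]
          · simp [Matrix.updateCol_apply, hj]
        rw [h1, Finset.sum_insert ha]
        have h2 : (2:ℤ) ∣ (Fs.updateCol a fun i => C i a).det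
            - (A.updateCol a fun i => C i a).det := by
          apply det_mod2
          intro i j
          by_cases hj : j = a
          · subst hj; simp [Matrix.updateCol_apply]
          · simp only [Matrix.updateCol_apply, hj, if_false, hFs, Matrix.of_apply]
            split
            · exact ⟨C i j, by ring⟩
            · simp
        have h4 : (4:ℤ) ∣ 2 * ((Fs.updateCol a fun i => C i a).det
            - (A.updateCol a fun i => C i a).det) := by
          obtain ⟨t, ht⟩ := h2
          exact ⟨t, by rw [ht]; ring⟩
        have := dvd_add ih h4
        convert this using 1
        · rfl
        · ring
  have hU : (Matrix.of fun i j => A i j + if j ∈ (univ : Finset (Fin n)) then 2 * C i j else 0)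
      = A + 2 • C := by
    ext i j
    simp only [Matrix.of_apply, Finset.mem_univ, if_true, Matrix.add_apply,
      Matrix.smul_apply, smul_eq_mul, zsmul_eq_mul]
    ring
  have hmain := main univ
  rw [hU] at hmain
  have hT := sum_det_even A C hA hC hd
  obtain ⟨t, ht⟩ := hT
  have h4T : (4:ℤ) ∣ 2 * ∑ j, (A.updateCol j (fun i => C i j)).det := ⟨t, by rw [ht]; ring⟩
  have h5 := dvd_add hmain h4T
  rwa [sub_add_cancel] at h5

lemma symS_transpose {n : ℕ} (X : Matrix (Fin n) (Fin n) ℤ) : (symS X)ᵀ = symS X := by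
  simp [symS, Matrix.transpose_add, Matrix.transpose_transpose, add_comm]

lemma symS_apply {n : ℕ} (X : Matrix (Fin n) (Fin n) ℤ) (i j : Fin n) :
    symS X i j = (if i < j then X i j else if i = j then 1 else 0)
      + (if j < i then X j i else if j = i then 1 else 0) := rfl

lemma symS_diag {n : ℕ} (X : Matrix (Fin n) (Fin n) ℤ) (i : Fin n) : symS X i i = 2 := by
  simp [symS_apply]

lemma symS_sub_even {n : ℕ} (X : Matrix (Fin n) (Fin n) ℤ) (hX : Xᵀ = -X) (i j : Fin n) :
    (2:ℤ) ∣ symS X i j - X i j := by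
  have hXd : ∀ a b, X b a = - X a b := by
    intro a b
    have := congrFun (congrFun hX a) b
    simpa using this
  rcases lt_trichotomy i j with h | h | h
  · simp [symS_apply, h, asymm h, h.ne, h.ne']
  · subst h
    have hii : X i i = 0 := by have := hXd i i; omega
    simp [symS_apply, hii]
  · rw [symS_apply]
    simp only [h, asymm h, h.ne, h.ne', if_false, if_true]
    rw [hXd i j]
    exact ⟨-X i j, by ring⟩

lemma mul_even {n : ℕ} (M D N : Matrix (Fin n) (Fin n) ℤ) (hD : ∀ p q, (2:ℤ) ∣ D p q)
    (i j : Fin n) : (2:ℤ) ∣ (M * D * N) i j := by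
  rw [Matrix.mul_apply]
  apply Finset.dvd_sum
  intro q _
  rw [Matrix.mul_apply, Finset.sum_mul]
  apply Finset.dvd_sum
  intro p _
  exact Dvd.dvd.mul_right (Dvd.dvd.mul_left (hD p q) _) _

section rep
variable {n : ℕ} (B : Matrix (Fin n) (Fin n) ℤ) (k : Fin n) (hB : Bᵀ = -B)

lemma repM_apply (i j : Fin n) : repM B k i j =
    (if i = j then (if i = k then (-1 : ℤ) else 1) else 0) +
    (if j = k then max 0 (-(B i k)) else 0) := rfl

include hB in
lemma Bkk : B k k = 0 := by
  have := congrFun (congrFun hB k) k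
  simp only [Matrix.transpose_apply, Matrix.neg_apply] at this
  omega

include hB in
lemma repM_row_k (p : Fin n) : repM B k k p = if p = k then -1 else 0 := by
  rw [repM_apply]
  by_cases hp : p = k
  · simp [hp, Bkk B k hB]
  · simp [hp, Ne.symm hp]

lemma repM_row_ne {i : Fin n} (hik : i ≠ k) (p : Fin n) :
    repM B k i p = (if p = i then 1 else 0) + (if p = k then max 0 (-(B i k)) else 0) := by
  rw [repM_apply]
  by_cases hp : p = i
  · subst hp
    simp [hik]
  · simp [hp, Ne.symm hp]

include hB in
lemma repM_det : (repM B k).det = -1 := by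
  have hM : repM B k = (1 : Matrix (Fin n) (Fin n) ℤ).updateCol k (fun i => repM B k i k) := by
    ext i j
    by_cases hj : j = k
    · subst hj
      simp [Matrix.updateCol_apply]
    · rw [Matrix.updateCol_apply, if_neg hj, repM_apply, if_neg hj]
      by_cases hij : i = j
      · subst hij
        simp [fun h => hj (h : i = k), Matrix.one_apply]
      · simp [hij, Matrix.one_apply]
  rw [hM, ← Matrix.cramer_apply, Matrix.cramer_eq_adjugate_mulVec, Matrix.adjugate_one,
    Matrix.one_mulVec]
  rw [repM_apply]
  simp [Bkk B k hB]

end rep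

lemma conj_diag {n : ℕ} (B : Matrix (Fin n) (Fin n) ℤ) (k : Fin n) (hB : Bᵀ = -B) (i : Fin n) :
    (4:ℤ) ∣ (repM B k * symS B * (repM B k)ᵀ) i i - 2 := by
  have expand : ∀ i : Fin n, (repM B k * symS B * (repM B k)ᵀ) i i
      = ∑ q, (∑ p, repM B k i p * symS B p q) * repM B k i q := by
    intro i
    rw [Matrix.mul_apply]
    apply Finset.sum_congr rfl
    intro q _
    rw [Matrix.mul_apply, Matrix.transpose_apply]
  by_cases hik : i = k
  · rw [hik, expand]
    simp only [repM_row_k B k hB, ite_mul, neg_one_mul, neg_mul, one_mul, zero_mul,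
      Finset.sum_ite_eq', Finset.mem_univ, if_true, mul_ite, mul_neg, mul_zero, mul_one,
      neg_neg]
    rw [symS_diag]
    norm_num
  · rw [expand]
    simp only [repM_row_ne B k hik, add_mul, mul_add, ite_mul, mul_ite, one_mul, mul_one,
      zero_mul, mul_zero, Finset.sum_add_distrib, Finset.sum_ite_eq', Finset.mem_univ, if_true]
    have hS : symS B k i = symS B i k := congrFun (congrFun (symS_transpose B) i) k
    rw [symS_diag, symS_diag, hS]
    have hSik : symS B i k = B i k ∨ symS B i k = -(B i k) := by
      rcases lt_or_gt_of_ne hik with h | h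
      · left
        rw [symS_apply]
        simp [h, asymm h, h.ne, h.ne']
      · right
        rw [symS_apply]
        have hd : B k i = -(B i k) := by
          have := congrFun (congrFun hB i) k
          simpa using this
        simp [h, asymm h, h.ne, h.ne', hd]
    rcases le_or_gt (-(B i k)) 0 with he | he
    · rw [max_eq_left he]
      simp
    · have hmax : (0 : ℤ) ⊔ -B i k = -B i k := max_eq_right he.le
      rw [hmax]
      rcases hSik with h | h <;> rw [h]
      · exact ⟨0, by ring⟩
      · exact ⟨(B i k) * (B i k), by ring⟩

end Stmt15Helpers

theorem stmt_15 {n : ℕ} (B : Matrix (Fin n) (Fin n) ℤ) (hB : Bᵀ = -B) (k : Fin n) :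
    deltaInv (mutB B k) = deltaInv B := by
  have hskew : (mutB B k)ᵀ = -(mutB B k) := by
    unfold mutB
    rw [Matrix.transpose_mul, Matrix.transpose_mul, Matrix.transpose_transpose, hB]
    simp [Matrix.mul_assoc, Matrix.neg_mul, Matrix.mul_neg]
  have hMS : (repM B k * symS B * (repM B k)ᵀ)ᵀ = repM B k * symS B * (repM B k)ᵀ := by
    rw [Matrix.transpose_mul, Matrix.transpose_mul, Matrix.transpose_transpose, symS_transpose,
      Matrix.mul_assoc]
  have hdiff : ∀ i j, (2:ℤ) ∣ symS (mutB B k) i j - (repM B k * symS B * (repM B k)ᵀ) i j := by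
    intro i j
    have h1 := symS_sub_even (mutB B k) hskew i j
    have heq : mutB B k - repM B k * symS B * (repM B k)ᵀ
        = repM B k * (B - symS B) * (repM B k)ᵀ := by
      unfold mutB
      rw [Matrix.mul_sub, Matrix.sub_mul]
    have h2 : (2:ℤ) ∣ (mutB B k - repM B k * symS B * (repM B k)ᵀ) i j := by
      rw [heq]
      apply mul_even
      intro p q
      have h3 := symS_sub_even B hB p q
      simp only [Matrix.sub_apply]
      omega
    simp only [Matrix.sub_apply] at h2
    omega
  have hCeq : symS (mutB B k) = repM B k * symS B * (repM B k)ᵀ +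
      (2:ℤ) • (Matrix.of fun i j =>
        (symS (mutB B k) i j - (repM B k * symS B * (repM B k)ᵀ) i j) / 2) := by
    ext i j
    have h := hdiff i j
    rw [Matrix.add_apply, Matrix.smul_apply, Matrix.of_apply, smul_eq_mul]
    omega
  have hCsym : (Matrix.of fun i j =>
      (symS (mutB B k) i j - (repM B k * symS B * (repM B k)ᵀ) i j) / 2)ᵀ
      = (Matrix.of fun i j =>
      (symS (mutB B k) i j - (repM B k * symS B * (repM B k)ᵀ) i j) / 2) := by
    ext i j
    rw [Matrix.transpose_apply, Matrix.of_apply, Matrix.of_apply]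
    rw [show symS (mutB B k) j i = symS (mutB B k) i j from
      congrFun (congrFun (symS_transpose _) i) j]
    rw [show (repM B k * symS B * (repM B k)ᵀ) j i = (repM B k * symS B * (repM B k)ᵀ) i j from
      congrFun (congrFun hMS i) j]
  have hCd : ∀ i, (2:ℤ) ∣ (Matrix.of fun i j =>
      (symS (mutB B k) i j - (repM B k * symS B * (repM B k)ᵀ) i j) / 2) i i := by
    intro i
    have h4 := conj_diag B k hB i
    rw [Matrix.of_apply, symS_diag]
    omega
  have hkey := det_add_two_smul _ _ hMS hCsym hCd
  rw [← hCeq] at hkey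
  have hdetA : (repM B k * symS B * (repM B k)ᵀ).det = (symS B).det := by
    rw [Matrix.det_mul, Matrix.det_mul, Matrix.det_transpose, repM_det B k hB]
    ring
  rw [hdetA] at hkey
  unfold deltaInv
  omega
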